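/- For every z ∈ ℂ with Re z > 0, the integral I₀(z) := ∫₀^∞ exp((i−t)z)/√(t²−2it) dt converges absolutely and satisfies |(2/π)·I₀(z)| ≤ |exp(iz)|·√(2/(π·Re z)); equivalently, the Hankel function of the first kind of order zero, H₀^{(1)}(z) = −(2i/π)∫₀^∞ exp((i−t)z)/√(t²−2it) dt, satisfies |H₀^{(1)}(z)| ≤ |exp(iz)|·√(2/(π·Re z)). -/

import Mathlib

noncomputable section

open Complex MeasureTheory

/-- The principal branch of the complex square root. -/
def csqrt (z : ℂ) : ℂ := z ^ (1 / 2 : ℂ)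

/-- For `Re z > 0`, the integral representation
`H₀⁽¹⁾(z) = −(2i/π) ∫₀^∞ exp((i−t)z)/√(t²−2it) dt` of the Hankel function of the first kind of
order zero converges absolutely and `|H₀⁽¹⁾(z)| ≤ |exp(iz)|·√(2/(π·Re z))`. -/
theorem hankel_zero_bound (z : ℂ) (hz : 0 < z.re) :
    IntegrableOn
      (fun t : ℝ => Complex.exp ((Complex.I - (t : ℂ)) * z) / csqrt ((t : ℂ) ^ 2 - 2 * Complex.I * t))
      (Set.Ioi 0) volume ∧
    ‖((2 : ℂ) / (Real.pi : ℂ)) *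
        ∫ t in Set.Ioi (0 : ℝ),
          Complex.exp ((Complex.I - (t : ℂ)) * z) / csqrt ((t : ℂ) ^ 2 - 2 * Complex.I * t)‖ ≤
      ‖Complex.exp (Complex.I * z)‖ * Real.sqrt (2 / (Real.pi * z.re)) := by
  have hπ := Real.pi_pos
  set x := z.re with hx
  set C := Real.exp (-z.im) with hC
  have hCpos : 0 < C := Real.exp_pos _
  set f : ℝ → ℂ := fun t =>
    Complex.exp ((Complex.I - (t : ℂ)) * z) / csqrt ((t : ℂ) ^ 2 - 2 * Complex.I * t) with hf
  set g : ℝ → ℝ := fun t => C / Real.sqrt 2 * (t ^ ((1 : ℝ) / 2 - 1) * Real.exp (-(x * t))) with hg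
  -- norm of the exponential factor
  have hnormexp : ∀ t : ℝ, ‖Complex.exp ((Complex.I - (t : ℂ)) * z)‖ = C * Real.exp (-(x * t)) := by
    intro t
    rw [Complex.norm_exp, ← Real.exp_add]
    congr 1
    simp [Complex.sub_re, Complex.sub_im, Complex.mul_re]
    ring
  -- the denominator: nonzero and lower bound on its norm
  have him : ∀ t : ℝ, ((t : ℂ) ^ 2 - 2 * Complex.I * t).im = -(2 * t) := by
    intro t
    simp [Complex.sub_im, Complex.mul_im, Complex.mul_re, ← Complex.ofReal_pow]
  have hwne : ∀ t : ℝ, 0 < t → ((t : ℂ) ^ 2 - 2 * Complex.I * t) ≠ 0 := by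
    intro t ht h0
    have : ((t : ℂ) ^ 2 - 2 * Complex.I * t).im = 0 := by rw [h0]; simp
    rw [him] at this; nlinarith
  have hcs : ∀ t : ℝ, 0 < t →
      Real.sqrt 2 * t ^ ((1 : ℝ) / 2) ≤ ‖csqrt ((t : ℂ) ^ 2 - 2 * Complex.I * t)‖ := by
    intro t ht
    set w : ℂ := (t : ℂ) ^ 2 - 2 * Complex.I * t with hw
    have hne := hwne t ht
    have habs : ‖csqrt w‖ = ‖w‖ ^ ((1 : ℝ) / 2) := by
      rw [csqrt, Complex.norm_cpow_of_ne_zero hne]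
      simp [hw]
    rw [habs]
    have h2t : 2 * t ≤ ‖w‖ := by
      have := Complex.abs_im_le_norm w
      rw [him t] at this
      rw [abs_neg] at this
      exact le_trans (le_abs_self _) this
    calc Real.sqrt 2 * t ^ ((1 : ℝ) / 2) = (2 * t) ^ ((1 : ℝ) / 2) := by
          rw [Real.mul_rpow (by norm_num) ht.le]; norm_num [Real.sqrt_eq_rpow]
      _ ≤ ‖w‖ ^ ((1 : ℝ) / 2) :=
          Real.rpow_le_rpow (by positivity) h2t (by norm_num)
  -- pointwise bound
  have hle : ∀ t ∈ Set.Ioi (0 : ℝ), ‖f t‖ ≤ g t := by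
    intro t ht
    rw [Set.mem_Ioi] at ht
    have h1 := hcs t ht
    have hpos : 0 < Real.sqrt 2 * t ^ ((1 : ℝ) / 2) := by positivity
    have : ‖f t‖ ≤ C * Real.exp (-(x * t)) / (Real.sqrt 2 * t ^ ((1 : ℝ) / 2)) := by
      rw [hf, norm_div, hnormexp]
      exact div_le_div_of_nonneg_left (by positivity) hpos h1
    refine this.trans_eq ?_
    show _ = C / Real.sqrt 2 * (t ^ ((1 : ℝ) / 2 - 1) * Real.exp (-(x * t)))
    have ht2 : t ^ ((1 : ℝ) / 2 - 1) = (t ^ ((1 : ℝ) / 2))⁻¹ := by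
      rw [show (1 : ℝ) / 2 - 1 = -(1 / 2) by norm_num, Real.rpow_neg ht.le]
    rw [ht2]
    field_simp
  have haemeas : AEStronglyMeasurable f (volume.restrict (Set.Ioi (0 : ℝ))) := by
    apply ContinuousOn.aestronglyMeasurable _ measurableSet_Ioi
    apply ContinuousOn.div
    · exact (Complex.continuous_exp.comp
        (((continuous_const.sub Complex.continuous_ofReal).mul continuous_const))).continuousOn
    · apply ContinuousOn.cpow_const
      · exact ((Complex.continuous_ofReal.pow 2).sub
          ((continuous_const.mul Complex.continuous_ofReal))).continuousOn
      · intro t ht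
        rw [Set.mem_Ioi] at ht
        exact Or.inr (by rw [him t]; intro h; nlinarith)
    · intro t ht
      rw [Set.mem_Ioi] at ht
      exact fun h0 => hwne t ht (by
        have := Complex.cpow_eq_zero_iff ((t : ℂ) ^ 2 - 2 * Complex.I * t) (1 / 2 : ℂ)
        exact (this.mp h0).1)
  -- integrability of the bound
  have hgint : IntegrableOn g (Set.Ioi (0 : ℝ)) := by
    apply Integrable.const_mul
    have := integrableOn_rpow_mul_exp_neg_mul_rpow
      (s := (1 : ℝ) / 2 - 1) (p := 1) (b := x) (by norm_num) zero_lt_one hz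
    simpa [Real.rpow_one, neg_mul, IntegrableOn] using this
  have hbound : ∀ᵐ t ∂(volume.restrict (Set.Ioi (0 : ℝ))), ‖f t‖ ≤ g t := by
    filter_upwards [ae_restrict_mem measurableSet_Ioi] with t ht using hle t ht
  have hint : IntegrableOn f (Set.Ioi 0) volume := Integrable.mono' hgint haemeas hbound
  refine ⟨hint, ?_⟩
  -- value of the integral of the bound
  have hgval : ∫ t in Set.Ioi (0 : ℝ), g t
      = C / Real.sqrt 2 * ((1 / x) ^ ((1 : ℝ) / 2) * Real.Gamma (1 / 2)) := by
    simp only [hg]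
    rw [integral_const_mul,
      Real.integral_rpow_mul_exp_neg_mul_Ioi (by norm_num : (0 : ℝ) < 1 / 2) hz]
  have hIle : ‖∫ t in Set.Ioi (0 : ℝ), f t‖ ≤ ∫ t in Set.Ioi (0 : ℝ), g t :=
    norm_integral_le_of_norm_le hgint hbound
  have hCE : ‖Complex.exp (Complex.I * z)‖ = C := by
    rw [Complex.norm_exp, hC]
    congr 1
    simp [Complex.mul_re]
  have hnorm2π : ‖((2 : ℂ) / (Real.pi : ℂ))‖ = 2 / Real.pi := by
    rw [norm_div]
    simp [Complex.norm_real, Real.norm_eq_abs, abs_of_pos hπ]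
  rw [norm_mul, hnorm2π, hCE]
  have key : 2 / Real.pi * (C / Real.sqrt 2 * ((1 / x) ^ ((1 : ℝ) / 2) * Real.Gamma (1 / 2)))
      = C * Real.sqrt (2 / (Real.pi * x)) := by
    rw [Real.Gamma_one_half_eq, ← Real.sqrt_eq_rpow]
    have hs2 : Real.sqrt 2 ^ 2 = 2 := Real.sq_sqrt (by norm_num)
    have hsπ : Real.sqrt Real.pi ^ 2 = Real.pi := Real.sq_sqrt hπ.le
    have hsx : Real.sqrt x ^ 2 = x := Real.sq_sqrt hz.le
    rw [Real.sqrt_div (by norm_num : (0 : ℝ) ≤ 2), Real.sqrt_mul hπ.le,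
      one_div, Real.sqrt_inv]
    have h2' : Real.sqrt 2 ≠ 0 := by positivity
    have hπ' : Real.sqrt Real.pi ≠ 0 := by positivity
    have hx' : Real.sqrt x ≠ 0 := by positivity
    field_simp
    linear_combination 2 * hsπ - Real.pi * hs2
  calc 2 / Real.pi * ‖∫ t in Set.Ioi (0 : ℝ), f t‖
      ≤ 2 / Real.pi * (∫ t in Set.Ioi (0 : ℝ), g t) := by
        apply mul_le_mul_of_nonneg_left hIle (by positivity)
    _ = C * Real.sqrt (2 / (Real.pi * x)) := by rw [hgval, key]
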